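/- Let t, n ∈ ℕ, let u_1, …, u_t ∈ ℝ^n be unit vectors, let θ_1 ≥ θ_2 ≥ ⋯ ≥ θ_t > 0, and let A = Σ_{i=1}^t θ_i u_i u_iᵀ. Then for every k with 1 ≤ k ≤ min(n, t), Σ_{i=1}^k θ_i ≤ Σ_{i=1}^k λ_i(A), where λ_1(A) ≥ ⋯ ≥ λ_n(A) are the eigenvalues of the symmetric matrix A in decreasing order. -/

import Mathlib

open Matrix

open Finset

/-- The `j`-th largest entry of the tuple `x` (indices starting from `0`,
so `downOrd x 0` is the largest entry). -/
noncomputable def downOrd {p : ℕ} (x : Fin p → ℝ) (j : Fin p) : ℝ :=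
  x (Tuple.sort x j.rev)

lemma aux_card_filter_lt (p k : ℕ) (hkp : k ≤ p) :
    (Finset.univ.filter (fun i : Fin p => (i:ℕ) < k)).card = k := by
  have h1 : (Finset.univ.filter (fun i : Fin p => (i:ℕ) < k))
      = Finset.map (Fin.castLEEmb hkp) Finset.univ := by
    ext i
    simp only [mem_filter, mem_univ, true_and, Finset.mem_map, Fin.castLEEmb]
    constructor
    · intro h; exact ⟨⟨i, h⟩, by ext; simp⟩
    · rintro ⟨j, rfl⟩; simp
  rw [h1, Finset.card_map, Finset.card_univ, Fintype.card_fin]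

lemma aux_card_filter_not_lt (p k : ℕ) (hkp : k ≤ p) :
    (Finset.univ.filter (fun i : Fin p => ¬ (i:ℕ) < k)).card = p - k := by
  have := Finset.card_filter_add_card_filter_not
    (s := (Finset.univ : Finset (Fin p))) (p := fun i : Fin p => (i:ℕ) < k)
  rw [aux_card_filter_lt p k hkp, Finset.card_univ, Fintype.card_fin] at this
  omega

lemma aux_mul_nonneg_of_nonpos_nonpos {a b : ℝ} (ha : a ≤ 0) (hb : b ≤ 0) : 0 ≤ a * b := by
  nlinarith

lemma aux_abel {p k : ℕ} (hk1 : 1 ≤ k) (hkp : k ≤ p) (lam : Fin p → ℝ) (hlam : Antitone lam)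
    (c : Fin p → ℝ) (h0 : ∀ i, 0 ≤ c i) (h1 : ∀ i, c i ≤ 1)
    (hsum : ∑ i, c i = (p : ℝ) - k) :
    ∑ i ∈ Finset.univ.filter (fun i : Fin p => ¬ (i:ℕ) < k), lam i ≤ ∑ i, lam i * c i := by
  have hkp' : k - 1 < p := by omega
  set μ : ℝ := lam ⟨k - 1, hkp'⟩ with hμ
  have key : ∑ i, lam i * c i - ∑ i ∈ Finset.univ.filter (fun i : Fin p => ¬ (i:ℕ) < k), lam i
      = (∑ i ∈ Finset.univ.filter (fun i : Fin p => (i:ℕ) < k), (lam i - μ) * c i)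
        + ∑ i ∈ Finset.univ.filter (fun i : Fin p => ¬ (i:ℕ) < k), (lam i - μ) * (c i - 1) := by
    have e1 : ∑ i, lam i * c i = (∑ i, (lam i - μ) * c i) + μ * ∑ i, c i := by
      rw [Finset.mul_sum, ← Finset.sum_add_distrib]; congr 1; ext i; ring
    have e2 : ∑ i ∈ Finset.univ.filter (fun i : Fin p => ¬ (i:ℕ) < k), lam i
        = (∑ i ∈ Finset.univ.filter (fun i : Fin p => ¬ (i:ℕ) < k), (lam i - μ))
          + μ * ((p : ℝ) - k) := by
      have hc : ((Finset.univ.filter (fun i : Fin p => ¬ (i:ℕ) < k)).card : ℝ) = (p:ℝ) - k := by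
        rw [aux_card_filter_not_lt p k hkp]; push_cast [Nat.cast_sub hkp]; ring
      rw [show μ * ((p:ℝ) - k) = ∑ _i ∈ Finset.univ.filter (fun i : Fin p => ¬ (i:ℕ) < k), μ by
        rw [Finset.sum_const, nsmul_eq_mul, hc]; ring]
      rw [← Finset.sum_add_distrib]
      congr 1; ext i; ring
    have s1 : ∑ i, (lam i - μ) * c i
        = (∑ i ∈ Finset.univ.filter (fun i : Fin p => (i:ℕ) < k), (lam i - μ) * c i)
          + ∑ i ∈ Finset.univ.filter (fun i : Fin p => ¬ (i:ℕ) < k), (lam i - μ) * c i :=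
      (Finset.sum_filter_add_sum_filter_not Finset.univ _ _).symm
    have s2 : ∑ i ∈ Finset.univ.filter (fun i : Fin p => ¬ (i:ℕ) < k), (lam i - μ) * (c i - 1)
        = (∑ i ∈ Finset.univ.filter (fun i : Fin p => ¬ (i:ℕ) < k), (lam i - μ) * c i)
          - ∑ i ∈ Finset.univ.filter (fun i : Fin p => ¬ (i:ℕ) < k), (lam i - μ) := by
      rw [← Finset.sum_sub_distrib]; congr 1; ext i; ring
    rw [e1, e2, hsum]
    linarith [s1, s2]
  have t1 : 0 ≤ ∑ i ∈ Finset.univ.filter (fun i : Fin p => (i:ℕ) < k), (lam i - μ) * c i := by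
    apply Finset.sum_nonneg; intro i hi
    simp only [mem_filter, mem_univ, true_and] at hi
    have : μ ≤ lam i := hlam (by simp [Fin.le_def]; omega)
    exact mul_nonneg (by linarith) (h0 i)
  have t2 : 0 ≤ ∑ i ∈ Finset.univ.filter (fun i : Fin p => ¬ (i:ℕ) < k), (lam i - μ) * (c i - 1) := by
    apply Finset.sum_nonneg; intro i hi
    simp only [mem_filter, mem_univ, true_and] at hi
    have : lam i ≤ μ := hlam (by simp [Fin.le_def]; omega)
    exact aux_mul_nonneg_of_nonpos_nonpos (by linarith) (by linarith [h1 i])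
  linarith

lemma aux_quad_expand {n : ℕ} (A : Matrix (Fin n) (Fin n) ℝ) (hH : A.IsHermitian) (x : Fin n → ℝ) :
    x ⬝ᵥ A *ᵥ x = ∑ i, hH.eigenvalues i * ((⇑(hH.eigenvectorBasis i) : Fin n → ℝ) ⬝ᵥ x)^2 := by
  set y : Fin n → ℝ := fun i => (⇑(hH.eigenvectorBasis i) : Fin n → ℝ) ⬝ᵥ x with hy
  have h1 : star ((hH.eigenvectorUnitary : Matrix (Fin n) (Fin n) ℝ)) *ᵥ x = y := by
    ext i
    simp [mulVec, dotProduct, hy]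
  have h2 : vecMul x ((hH.eigenvectorUnitary : Matrix (Fin n) (Fin n) ℝ)) = y := by
    ext i
    simp [vecMul, dotProduct, hy, mul_comm]
  conv_lhs => rw [hH.spectral_theorem, Unitary.conjStarAlgAut_apply]
  rw [← mulVec_mulVec, ← mulVec_mulVec, dotProduct_mulVec, h1, h2]
  simp only [RCLike.ofReal_real_eq_id]
  rw [show (id ∘ hH.eigenvalues) = hH.eigenvalues from rfl]
  simp only [dotProduct, mulVec_diagonal]
  congr 1; ext i; simp only [hy, dotProduct]; ring

lemma aux_trace_eq_sum_eigenvalues {n : ℕ} (A : Matrix (Fin n) (Fin n) ℝ) (hH : A.IsHermitian) :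
    A.trace = ∑ i, hH.eigenvalues i := by
  conv_lhs => rw [hH.spectral_theorem, Unitary.conjStarAlgAut_apply]
  rw [Matrix.trace_mul_cycle, Unitary.coe_star_mul_self, one_mul, Matrix.trace_diagonal]
  simp

lemma aux_dot_sum_mulVec {n : ℕ} {ι : Type*} (s : Finset ι) (M : ι → Matrix (Fin n) (Fin n) ℝ)
    (x y : Fin n → ℝ) :
    x ⬝ᵥ ((∑ i ∈ s, M i) *ᵥ y) = ∑ i ∈ s, x ⬝ᵥ (M i *ᵥ y) := by
  have h : (∑ i ∈ s, M i) *ᵥ y = ∑ i ∈ s, (M i *ᵥ y) := by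
    ext l
    simp only [mulVec, dotProduct, Finset.sum_apply, Matrix.sum_apply, Finset.sum_mul]
    exact Finset.sum_comm
  rw [h]
  simp only [dotProduct, Finset.sum_apply, Finset.mul_sum]
  exact Finset.sum_comm

lemma aux_dot_vecMulVec {n : ℕ} (v x : Fin n → ℝ) (θ : ℝ) :
    x ⬝ᵥ ((θ • vecMulVec v v) *ᵥ x) = θ * (v ⬝ᵥ x)^2 := by
  have h : (θ • vecMulVec v v) *ᵥ x = (θ * (v ⬝ᵥ x)) • v := by
    ext l
    simp only [mulVec, dotProduct, Matrix.smul_apply, vecMulVec_apply, Pi.smul_apply,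
      smul_eq_mul]
    rw [mul_assoc, Finset.sum_mul, Finset.mul_sum]
    congr 1; ext j; ring
  rw [h, dotProduct_smul]
  simp only [smul_eq_mul]
  rw [dotProduct_comm]
  ring

/-- If `A = Σ θ_i u_i u_iᵀ` with unit vectors `u_i` and `θ_1 ≥ ⋯ ≥ θ_t > 0`, then
`(θ_1, …, θ_k)` is dominated by the `k` largest eigenvalues of `A`. -/
theorem sum_theta_le_sum_largest_eigenvalues {t n : ℕ}
    (u : Fin t → Fin n → ℝ) (hunit : ∀ i, u i ⬝ᵥ u i = 1)
    (θ : Fin t → ℝ) (hmono : Antitone θ) (hpos : ∀ i, 0 < θ i)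
    (A : Matrix (Fin n) (Fin n) ℝ)
    (hA : A = ∑ i, θ i • Matrix.vecMulVec (u i) (u i))
    (hH : A.IsHermitian)
    (k : ℕ) (hk1 : 1 ≤ k) (hkn : k ≤ n) (hkt : k ≤ t) :
    ∑ i ∈ Finset.univ.filter (fun i : Fin t => (i : ℕ) < k), θ i ≤
      ∑ i ∈ Finset.univ.filter (fun i : Fin n => (i : ℕ) < k),
        downOrd hH.eigenvalues i := by
  classical
  set lam := hH.eigenvalues with hlam
  set σ : Equiv.Perm (Fin n) := Tuple.sort lam with hσ
  set ρ : Equiv.Perm (Fin n) := Fin.revPerm.trans σ with hρ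
  have hdown : ∀ j : Fin n, downOrd lam j = lam (ρ j) := fun j => rfl
  have hdown_anti : Antitone (downOrd lam) := by
    intro i j hij
    exact Tuple.monotone_sort lam (show j.rev ≤ i.rev from Fin.rev_le_rev.mpr hij)
  -- trace identities
  have htraceθ : A.trace = ∑ i, θ i := by
    rw [hA, Matrix.trace_sum]
    congr 1; ext i
    rw [Matrix.trace_smul]
    have : (vecMulVec (u i) (u i)).trace = 1 := by
      rw [← hunit i]
      simp [Matrix.trace, Matrix.diag, vecMulVec_apply, dotProduct]
    rw [this]; simp
  have htrace : ∑ i, θ i = ∑ j, downOrd lam j := by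
    have h2 : ∑ j, downOrd lam j = ∑ i, lam i := by
      simp only [hdown]
      exact Equiv.sum_comp ρ lam
    rw [h2, ← aux_trace_eq_sum_eigenvalues A hH, htraceθ]
  -- the orthonormal family spanning the complement
  set S : Submodule ℝ (EuclideanSpace ℝ (Fin n)) :=
    Submodule.span ℝ (Set.range (fun i : Fin k => (WithLp.toLp 2 (u (Fin.castLE hkt i)) : EuclideanSpace ℝ (Fin n)))) with hS
  have hrankS : Module.finrank ℝ S ≤ k := by
    simpa [Set.finrank] using
      finrank_range_le_card (R := ℝ) (fun i : Fin k => (WithLp.toLp 2 (u (Fin.castLE hkt i)) : EuclideanSpace ℝ (Fin n)))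
  have hm : n - k ≤ Module.finrank ℝ Sᗮ := by
    have h := Submodule.finrank_add_finrank_orthogonal S
    have hE : Module.finrank ℝ (EuclideanSpace ℝ (Fin n)) = n := finrank_euclideanSpace_fin
    omega
  set b := stdOrthonormalBasis ℝ (↥Sᗮ) with hb
  set w : Fin (n - k) → EuclideanSpace ℝ (Fin n) :=
    fun j => ((b (Fin.castLE hm j) : ↥Sᗮ) : EuclideanSpace ℝ (Fin n)) with hw
  have hw_on : Orthonormal ℝ w := by
    have h1 : Orthonormal ℝ (fun j : Fin (Module.finrank ℝ ↥Sᗮ) =>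
        ((b j : ↥Sᗮ) : EuclideanSpace ℝ (Fin n))) :=
      b.orthonormal.comp_linearIsometry (Sᗮ).subtypeₗᵢ
    exact h1.comp _ (Fin.castLE_injective hm)
  -- dot product vs inner product
  have dot_inner : ∀ x y : EuclideanSpace ℝ (Fin n),
      dotProduct x y = (inner ℝ x y : ℝ) := by
    intro x y
    simp [PiLp.inner_apply, RCLike.inner_apply, dotProduct, mul_comm]
  have hnorm1 : ∀ x : EuclideanSpace ℝ (Fin n), dotProduct x x = 1 → ‖x‖ = 1 := by
    intro x hx
    have h2 : ‖x‖ ^ 2 = 1 := by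
      rw [← real_inner_self_eq_norm_sq, ← dot_inner x x, hx]
    nlinarith [norm_nonneg x]
  -- Bessel inequality for the family w
  have hBessel : ∀ x : EuclideanSpace ℝ (Fin n), ‖x‖ = 1 →
      ∑ j, (dotProduct x (w j))^2 ≤ 1 := by
    intro x hx
    have h := hw_on.sum_inner_products_le (𝕜 := ℝ) (s := Finset.univ) x
    rw [hx, one_pow] at h
    refine le_trans (le_of_eq ?_) h
    congr 1; ext j
    rw [dot_inner, real_inner_comm, Real.norm_eq_abs, sq_abs]
  -- w is orthogonal to the u i for i < k
  have hw_perp : ∀ (j) (i : Fin t), (i:ℕ) < k → dotProduct (u i) (w j) = 0 := by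
    intro j i hik
    have hu_mem : (WithLp.toLp 2 (u i) : EuclideanSpace ℝ (Fin n)) ∈ S := by
      apply Submodule.subset_span
      refine ⟨⟨(i:ℕ), hik⟩, ?_⟩
      show (WithLp.toLp 2 (u (Fin.castLE hkt ⟨(i:ℕ), hik⟩)) : EuclideanSpace ℝ (Fin n)) = WithLp.toLp 2 (u i)
      have hcast : Fin.castLE hkt ⟨(i:ℕ), hik⟩ = i := by ext; simp
      rw [hcast]
    have hw_mem : w j ∈ Sᗮ := (b (Fin.castLE hm j)).2
    exact (dot_inner (WithLp.toLp 2 (u i)) (w j)).trans (Submodule.inner_right_of_mem_orthogonal hu_mem hw_mem)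
  -- coefficients
  set c : Fin n → ℝ := fun i =>
    ∑ j, (dotProduct (⇑(hH.eigenvectorBasis (ρ i)) : Fin n → ℝ) (w j))^2 with hc
  have h0 : ∀ i, 0 ≤ c i := by
    intro i
    exact Finset.sum_nonneg fun j _ => sq_nonneg _
  have h1c : ∀ i, c i ≤ 1 := by
    intro i
    exact hBessel _ (hH.eigenvectorBasis.orthonormal.1 (ρ i))
  have hsumc : ∑ i, c i = (n : ℝ) - k := by
    rw [Finset.sum_comm]
    have hParseval : ∀ j, ∑ i, (dotProduct
        (⇑(hH.eigenvectorBasis (ρ i)) : Fin n → ℝ) (w j))^2 = 1 := by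
      intro j
      rw [Equiv.sum_comp ρ (fun i' =>
        (dotProduct (⇑(hH.eigenvectorBasis i') : Fin n → ℝ) (w j))^2)]
      have key : ∀ i' : Fin n,
          (dotProduct (⇑(hH.eigenvectorBasis i') : Fin n → ℝ) (w j))^2
          = (inner ℝ (w j) (hH.eigenvectorBasis i') : ℝ)
            * inner ℝ (hH.eigenvectorBasis i') (w j) := by
        intro i'
        rw [dot_inner, sq]
        nth_rewrite 1 [real_inner_comm]
        rfl
      simp only [key]
      rw [hH.eigenvectorBasis.sum_inner_mul_inner (w j) (w j)]
      rw [real_inner_self_eq_norm_sq, hw_on.1 j, one_pow]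
    calc ∑ j, ∑ i, (dotProduct
        (⇑(hH.eigenvectorBasis (ρ i)) : Fin n → ℝ) (w j))^2
        = ∑ j : Fin (n - k), (1:ℝ) := by
          congr 1; ext j; exact hParseval j
      _ = (n : ℝ) - k := by
          simp only [Finset.sum_const, Finset.card_univ, Fintype.card_fin, nsmul_eq_mul, mul_one]
          push_cast [Nat.cast_sub hkn]
          ring
  -- the quadratic form of A at w j, eigenvalue side
  have hquad : ∀ j, dotProduct (w j) (A *ᵥ (w j)) =
      ∑ i, downOrd lam i *
        (dotProduct (⇑(hH.eigenvectorBasis (ρ i)) : Fin n → ℝ) (w j))^2 := by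
    intro j
    rw [aux_quad_expand A hH]
    rw [← Equiv.sum_comp ρ (fun i' => lam i' *
      (dotProduct (⇑(hH.eigenvectorBasis i') : Fin n → ℝ) (w j))^2)]
    congr 1
  have hsum_eq : ∑ j, dotProduct (w j) (A *ᵥ (w j)) = ∑ i, downOrd lam i * c i := by
    simp only [hquad]
    rw [Finset.sum_comm]
    congr 1; ext i
    rw [hc, ← Finset.mul_sum]
  -- lower bound
  have hlower : ∑ i ∈ Finset.univ.filter (fun i : Fin n => ¬ (i:ℕ) < k), downOrd lam i
      ≤ ∑ j, dotProduct (w j) (A *ᵥ (w j)) := by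
    rw [hsum_eq]
    exact aux_abel hk1 hkn (downOrd lam) hdown_anti c h0 h1c hsumc
  -- upper bound
  have hθside : ∀ j, dotProduct (w j) (A *ᵥ (w j))
      = ∑ i, θ i * (dotProduct (u i) (w j))^2 := by
    intro j
    rw [hA, aux_dot_sum_mulVec]
    congr 1; ext i
    exact aux_dot_vecMulVec (u i) (w j) (θ i)
  have hupper : ∑ j, dotProduct (w j) (A *ᵥ (w j))
      ≤ ∑ i ∈ Finset.univ.filter (fun i : Fin t => ¬ (i:ℕ) < k), θ i := by
    have e1 : ∑ j, dotProduct (w j) (A *ᵥ (w j))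
        = ∑ i : Fin t, θ i * ∑ j, (dotProduct (u i) (w j))^2 := by
      simp only [hθside]
      rw [Finset.sum_comm]
      congr 1; ext i
      rw [← Finset.mul_sum]
    rw [e1, ← Finset.sum_filter_add_sum_filter_not Finset.univ (fun i : Fin t => (i:ℕ) < k)]
    have z1 : ∑ i ∈ Finset.univ.filter (fun i : Fin t => (i:ℕ) < k),
        θ i * ∑ j, (dotProduct (u i) (w j))^2 = 0 := by
      apply Finset.sum_eq_zero
      intro i hi
      simp only [mem_filter, mem_univ, true_and] at hi
      have : ∑ j, (dotProduct (u i) (w j))^2 = 0 := by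
        apply Finset.sum_eq_zero
        intro j _
        rw [hw_perp j i hi]
        ring
      rw [this, mul_zero]
    rw [z1, zero_add]
    apply Finset.sum_le_sum
    intro i _
    have hb1 : ∑ j, (dotProduct (u i) (w j))^2 ≤ 1 := hBessel (WithLp.toLp 2 (u i)) (hnorm1 _ (hunit i))
    calc θ i * ∑ j, (dotProduct (u i) (w j))^2 ≤ θ i * 1 :=
          mul_le_mul_of_nonneg_left hb1 (hpos i).le
      _ = θ i := mul_one _
  -- put everything together
  have split_θ := Finset.sum_filter_add_sum_filter_not (Finset.univ : Finset (Fin t))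
    (fun i => (i:ℕ) < k) θ
  have split_lam := Finset.sum_filter_add_sum_filter_not (Finset.univ : Finset (Fin n))
    (fun i => (i:ℕ) < k) (downOrd lam)
  have chain : ∑ i ∈ Finset.univ.filter (fun i : Fin n => ¬ (i:ℕ) < k), downOrd lam i
      ≤ ∑ i ∈ Finset.univ.filter (fun i : Fin t => ¬ (i:ℕ) < k), θ i :=
    le_trans hlower hupper
  linarith [htrace, chain, split_θ, split_lam]
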